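/- If S is a unital epsilon-strongly G-graded ring, then for every g ∈ G the left R-module S_{g⁻¹} is finitely generated projective, and the map η'_g: S_g → Hom_R(S_{g⁻¹}, R) defined by η'_g(s)(t) = ts is an isomorphism of left R-modules, where R = S_e. -/

import Mathlib

open Pointwise

section Defs

variable {G : Type} [AddGroup G] [DecidableEq G]
variable {A : Type} [Ring A]
variable {M : Type} [AddCommGroup M] [Module A M]

/-- The additive subgroup of `M` consisting of finite sums of products `a • m`
with `a ∈ S` and `m ∈ N`. -/
def prodSMul (S : AddSubgroup A) (N : AddSubgroup M) : AddSubgroup M where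
  __ := S.toAddSubmonoid • N.toAddSubmonoid
  neg_mem' {x} hx := by
    refine AddSubmonoid.smul_induction_on hx (fun a ha m hm => ?_) (fun x y hx hy => ?_)
    · rw [show -(a • m) = (-a) • m by rw [neg_smul]]
      exact AddSubmonoid.smul_mem_smul (S.neg_mem ha) hm
    · rw [neg_add]
      exact (S.toAddSubmonoid • N.toAddSubmonoid).add_mem hx hy

/-- A (possibly non-unital) ring, here an additive subgroup of `A` closed under
multiplication, is *s-unital* if every element has a left and a right local unit in it. -/
def IsSUnitalSub (I : AddSubgroup A) : Prop :=
  ∀ a ∈ I, ∃ u ∈ I, ∃ v ∈ I, u * a = a ∧ a * v = a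

variable (𝒜 : G → AddSubgroup A)

/-- `S` is symmetrically graded if `S_g S_{g⁻¹} S_g = S_g` for all `g`. -/
def IsSymmetricallyGraded : Prop := ∀ g : G, 𝒜 g * 𝒜 (-g) * 𝒜 g = 𝒜 g

/-- `S` is nearly epsilon-strongly graded if each `S_g` is an s-unital
`(S_g S_{g⁻¹}, S_{g⁻¹} S_g)`-bimodule: for every `s ∈ S_g` there are
`u ∈ S_g S_{g⁻¹}` and `v ∈ S_{g⁻¹} S_g` with `u s = s = s v`. -/
def IsNearlyEpsilonStrong : Prop :=
  ∀ g : G, ∀ s ∈ 𝒜 g, ∃ u ∈ 𝒜 g * 𝒜 (-g), ∃ v ∈ 𝒜 (-g) * 𝒜 g, u * s = s ∧ s * v = s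


section Stmt8

variable {G : Type} [AddGroup G] [DecidableEq G]
variable {A : Type} [Ring A] (𝒜 : G → AddSubgroup A) [GradedRing 𝒜]

/-- The left `R = S_e`-module structure on the homogeneous component `S_g`
given by multiplication. -/
instance gradeSMul (g : G) : SMul ↥(𝒜 0) ↥(𝒜 g) :=
  ⟨fun r s => ⟨r.1 * s.1, by
    have := SetLike.mul_mem_graded r.2 s.2; rwa [zero_add] at this⟩⟩

@[simp] lemma gradeSMul_coe (g : G) (r : ↥(𝒜 0)) (s : ↥(𝒜 g)) :
    ((r • s : ↥(𝒜 g)) : A) = r.1 * s.1 := rfl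

instance gradeModule (g : G) : Module ↥(𝒜 0) ↥(𝒜 g) where
  one_smul s := Subtype.ext (one_mul s.1)
  mul_smul r r' s := Subtype.ext (mul_assoc r.1 r'.1 s.1)
  smul_zero r := Subtype.ext (mul_zero r.1)
  smul_add r s t := Subtype.ext (mul_add r.1 s.1 t.1)
  add_smul r r' s := Subtype.ext (add_mul r.1 r'.1 s.1)
  zero_smul s := Subtype.ext (zero_mul s.1)

/-- The map `η'_g : S_g → Hom_R(S_{g⁻¹}, R)`, `η'_g(s)(t) = t s`. -/
def etaMap (g : G) (s : ↥(𝒜 g)) : ↥(𝒜 (-g)) →ₗ[↥(𝒜 0)] ↥(𝒜 0) where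
  toFun t := ⟨t.1 * s.1, by
    have := SetLike.mul_mem_graded t.2 s.2; rwa [neg_add_cancel] at this⟩
  map_add' t t' := Subtype.ext (add_mul t.1 t'.1 s.1)
  map_smul' r t := Subtype.ext (mul_assoc r.1 t.1 s.1)


lemma exists_rep {A : Type} [Ring A] {S T : AddSubgroup A} {x : A} (hx : x ∈ S * T) :
    ∃ (n : ℕ) (a b : Fin n → A), (∀ i, a i ∈ S) ∧ (∀ i, b i ∈ T) ∧ ∑ i, a i * b i = x := by
  refine AddSubmonoid.mul_induction_on (M := S.toAddSubmonoid) (N := T.toAddSubmonoid) (C := fun x => ∃ (n : ℕ) (a b : Fin n → A), (∀ i, a i ∈ S) ∧ (∀ i, b i ∈ T) ∧ ∑ i, a i * b i = x) hx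
    (fun m hm n hn => ⟨1, fun _ => m, fun _ => n, fun _ => hm, fun _ => hn, by simp⟩) ?_
  rintro x y ⟨n₁, a₁, b₁, ha₁, hb₁, h₁⟩ ⟨n₂, a₂, b₂, ha₂, hb₂, h₂⟩
  refine ⟨n₁ + n₂, Fin.append a₁ a₂, Fin.append b₁ b₂, ?_, ?_, ?_⟩
  · exact fun i => Fin.addCases (fun j => by simpa using ha₁ j) (fun j => by simpa using ha₂ j) i
  · exact fun i => Fin.addCases (fun j => by simpa using hb₁ j) (fun j => by simpa using hb₂ j) i
  · rw [Fin.sum_univ_add]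
    simp [h₁, h₂]

/-- If `S` is unital epsilon-strongly graded, then each `S_{g⁻¹}` is
a finitely generated projective left `R`-module and `η'_g : S_g → Hom_R(S_{g⁻¹}, R)`,
`η'_g(s)(t) = t s`, is an isomorphism of left `R`-modules. -/
theorem fg_projective_and_eta_bijective
    (ε : G → A)
    (hmem : ∀ g : G, ε g ∈ 𝒜 g * 𝒜 (-g))
    (hunit : ∀ g : G, ∀ s ∈ 𝒜 g, ε g * s = s ∧ s * ε (-g) = s)
    (g : G) :
    Module.Finite ↥(𝒜 0) ↥(𝒜 (-g)) ∧ Module.Projective ↥(𝒜 0) ↥(𝒜 (-g)) ∧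
      Function.Bijective (etaMap 𝒜 g) ∧
      (∀ s₁ s₂ : ↥(𝒜 g), etaMap 𝒜 g (s₁ + s₂) = etaMap 𝒜 g s₁ + etaMap 𝒜 g s₂) := by
  classical
  obtain ⟨n, a, b, ha, hb, hab⟩ := exists_rep (hmem g)
  -- key identities
  have key1 : ∀ t ∈ 𝒜 (-g), ∑ i, (t * a i) * b i = t := by
    intro t ht
    have h := (hunit (-g) t ht).2
    rw [neg_neg] at h
    calc ∑ i, (t * a i) * b i = t * ∑ i, a i * b i := by
          rw [Finset.mul_sum]; simp [mul_assoc]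
      _ = t := by rw [hab]; exact h
  have key2 : ∀ s ∈ 𝒜 g, ∑ i, a i * (b i * s) = s := by
    intro s hs
    have h := (hunit g s hs).1
    calc ∑ i, a i * (b i * s) = (∑ i, a i * b i) * s := by
          rw [Finset.sum_mul]; simp [mul_assoc]
      _ = s := by rw [hab]; exact h
  set R := ↥(𝒜 0)
  set M := ↥(𝒜 (-g))
  have hB : ∀ i, b i ∈ 𝒜 (-g) := hb
  let B : Fin n → M := fun i => ⟨b i, hb i⟩
  have hta : ∀ (t : M) (i : Fin n), (t : A) * a i ∈ 𝒜 0 := fun t i => by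
    have := SetLike.mul_mem_graded t.2 (ha i)
    rwa [neg_add_cancel] at this
  -- the linear maps for the dual basis
  let p : (Fin n → R) →ₗ[R] M :=
    { toFun := fun c => ∑ i, c i • B i
      map_add' := fun c d => by simp [add_smul, Finset.sum_add_distrib]
      map_smul' := fun r c => by simp [Finset.smul_sum, mul_smul]
      }
  let j : M →ₗ[R] (Fin n → R) :=
    { toFun := fun t i => ⟨(t : A) * a i, hta t i⟩
      map_add' := fun t t' => by
        funext i; exact Subtype.ext (add_mul t.1 t'.1 (a i))
      map_smul' := fun r t => by
        funext i
        exact Subtype.ext (mul_assoc r.1 t.1 (a i))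
      }
  have hsec : ∀ t : M, p (j t) = t := by
    intro t
    apply Subtype.ext
    show ((∑ i, (⟨(t : A) * a i, hta t i⟩ : R) • B i : M) : A) = t
    rw [AddSubmonoidClass.coe_finset_sum]
    exact key1 t.1 t.2
  have hsurj : Function.Surjective p := fun t => ⟨j t, hsec t⟩
  have hcomp : p.comp j = LinearMap.id := LinearMap.ext hsec
  refine ⟨Module.Finite.of_surjective p hsurj, Module.Projective.of_split j p hcomp, ⟨?_, ?_⟩, ?_⟩
  · -- injective
    intro s s' h
    apply Subtype.ext
    have hb2 : ∀ t : A, t ∈ 𝒜 (-g) → t * s.1 = t * s'.1 := by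
      intro t ht
      have := congrArg (fun f => (f ⟨t, ht⟩ : A)) h
      simpa [etaMap] using this
    calc (s : A) = ∑ i, a i * (b i * s.1) := (key2 s.1 s.2).symm
      _ = ∑ i, a i * (b i * s'.1) := by
          refine Finset.sum_congr rfl fun i _ => ?_
          rw [hb2 (b i) (hb i)]
      _ = s' := key2 s'.1 s'.2
  · -- surjective
    intro φ
    have hsmem : ∑ i, a i * (φ (B i) : A) ∈ 𝒜 g := by
      refine AddSubgroup.sum_mem _ fun i _ => ?_
      have := SetLike.mul_mem_graded (ha i) (φ (B i)).2
      rwa [add_zero] at this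
    refine ⟨⟨∑ i, a i * (φ (B i) : A), hsmem⟩, ?_⟩
    apply LinearMap.ext
    intro t
    apply Subtype.ext
    show (t : A) * (∑ i, a i * (φ (B i) : A)) = (φ t : A)
    have ht : φ t = ∑ i, (⟨(t : A) * a i, hta t i⟩ : R) • φ (B i) := by
      conv_lhs => rw [← hsec t]
      show φ (∑ i, _ • B i) = _
      rw [map_sum]
      exact Finset.sum_congr rfl fun i _ => (φ.map_smul _ _)
    rw [ht, AddSubmonoidClass.coe_finset_sum, Finset.mul_sum]
    refine Finset.sum_congr rfl fun i _ => ?_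
    show (t : A) * (a i * (φ (B i) : A)) = ((t : A) * a i) * (φ (B i) : A)
    rw [mul_assoc]
  · -- additivity
    intro s₁ s₂
    apply LinearMap.ext
    intro t
    exact Subtype.ext (mul_add t.1 s₁.1 s₂.1)


end Stmt8
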